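/- In the control framework: (i) for any (α^0,μ) ∈ 𝒜^0×C_μ such that the set D(α^0,μ) of optimal state-action flows is nonempty, the image set Γ(D(α^0,μ)) := ∪_{v∈D(α^0,μ)} Γ(v) is a nonempty convex subset of C_μ; (ii) the conditioning mapping Γ : 𝒱 → 2^{C_μ} has a closed graph: if v^n → v in 𝒱 and μ^n ∈ Γ(v^n) with μ^n → μ in C_μ, then μ ∈ Γ(v). -/

import Mathlib

open MeasureTheory Filter Topology
open scoped NNReal ENNReal

section ControlFramework

variable {S W A0 A1 : Type*}
variable [MetricSpace S] [CompactSpace S] [Nonempty S]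
  [MeasurableSpace S] [BorelSpace S] [SecondCountableTopology S]
variable [Fintype W] [Nonempty W] [TopologicalSpace W] [DiscreteTopology W]
  [MeasurableSpace W] [BorelSpace W]
variable [MetricSpace A0] [CompactSpace A0] [Nonempty A0] [MeasurableSpace A0] [BorelSpace A0]
variable [MetricSpace A1] [CompactSpace A1] [Nonempty A1] [MeasurableSpace A1] [BorelSpace A1]
  [SecondCountableTopology A1]
variable {T : ℕ}

variable (P0c : Fin T → W → A0 → ProbabilityMeasure (S × A1) → ProbabilityMeasure W)
variable (P1c : Fin T → S → W → A1 → ProbabilityMeasure (S × A1) → ProbabilityMeasure S)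
variable (f1 : Fin T → S → W → A1 → ProbabilityMeasure (S × A1) → ℝ)
variable (g1 : S → W → ProbabilityMeasure S → ℝ)

/-- `π⁰_{t+1}(u,{u'};α⁰_t(u),μ_t(u)) = ∫_{A⁰} P⁰_{t+1}(u,a,μ_t(u),{u'}) α⁰_t(u)(da)`. -/
noncomputable def pi0c (t : Fin T) (u : W) (α : ProbabilityMeasure A0)
    (μ : ProbabilityMeasure (S × A1)) (u' : W) : ℝ :=
  ∫ a, ((P0c t u a μ : Measure W) {u'}).toReal ∂(α : Measure A0)

/-- The minor player's value function by backward induction, indexed by the number `j` of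
periods remaining before the horizon `T`: `Vauxc α⁰ μ j = V^{1,α⁰,μ}_{T-j}`, solving the
Bellman equation
`V_t(x,u) = max_{a∈A¹} { f¹_t(x,u,a,μ_t(u)) + ∫ V_{t+1}(x',u') π_{t+1}(x,u,a;α⁰_t(u),μ_t(u);dx',du') }`
with terminal condition `V_T(x,u) = g¹(x,u,μ_T(u))`. -/
noncomputable def Vauxc (α0 : Fin T → W → ProbabilityMeasure A0)
    (μf : (Fin T → W → ProbabilityMeasure (S × A1)) × (W → ProbabilityMeasure S)) :
    ℕ → S → W → ℝ
  | 0, x, u => g1 x u (μf.2 u)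
  | (j + 1), x, u =>
      if h : T - (j + 1) < T then
        ⨆ a : A1,
          (f1 ⟨T - (j + 1), h⟩ x u a (μf.1 ⟨T - (j + 1), h⟩ u) +
            ∑ u' : W, pi0c P0c ⟨T - (j + 1), h⟩ u (α0 ⟨T - (j + 1), h⟩ u)
                (μf.1 ⟨T - (j + 1), h⟩ u) u' *
              ∫ x', Vauxc α0 μf j x' u'
                ∂(P1c ⟨T - (j + 1), h⟩ x u a (μf.1 ⟨T - (j + 1), h⟩ u) : Measure S))
      else g1 x u (μf.2 u)

/-- The minor player's value function `V^{1,α⁰,μ}_t` at calendar time `t`. -/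
noncomputable def Vtimec (α0 : Fin T → W → ProbabilityMeasure A0)
    (μf : (Fin T → W → ProbabilityMeasure (S × A1)) × (W → ProbabilityMeasure S))
    (t : ℕ) (x : S) (u : W) : ℝ :=
  Vauxc P0c P1c f1 g1 α0 μf (T - t) x u

/-- The Bellman integrand at time `t`:
`Q_t(x,u,a) = f¹_t(x,u,a,μ_t(u)) + ∫ V^{1,α⁰,μ}_{t+1} dπ_{t+1}(x,u,a;α⁰_t(u),μ_t(u))`. -/
noncomputable def Qfun (α0 : Fin T → W → ProbabilityMeasure A0)
    (μf : (Fin T → W → ProbabilityMeasure (S × A1)) × (W → ProbabilityMeasure S))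
    (t : Fin T) (x : S) (u : W) (a : A1) : ℝ :=
  f1 t x u a (μf.1 t u) +
    ∑ u' : W, pi0c P0c t u (α0 t u) (μf.1 t u) u' *
      ∫ x', Vtimec P0c P1c f1 g1 α0 μf ((t : ℕ) + 1) x' u'
        ∂(P1c t x u a (μf.1 t u) : Measure S)

/-- `B(α⁰,μ)`: state-action flows giving full mass, at each time, to the set of
Bellman maximizers. -/
def Bset (α0 : Fin T → W → ProbabilityMeasure A0)
    (μf : (Fin T → W → ProbabilityMeasure (S × A1)) × (W → ProbabilityMeasure S)) :
    Set ((Fin T → ProbabilityMeasure (S × W × A1)) × ProbabilityMeasure (S × W)) :=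
  {v | ∀ t : Fin T,
    (v.1 t : Measure (S × W × A1))
      {q : S × W × A1 | Qfun P0c P1c f1 g1 α0 μf t q.1 q.2.1 q.2.2 =
        ⨆ a' : A1, Qfun P0c P1c f1 g1 α0 μf t q.1 q.2.1 a'} = 1}

/-- One-step transition applied to a test function `f` on `S × W`:
`(x,u,a) ↦ ∫_{S×W} f dπ_{t+1}(x,u,a;α⁰_t(u),μ_t(u))`. -/
noncomputable def stepTest (α0 : Fin T → W → ProbabilityMeasure A0)
    (μf : (Fin T → W → ProbabilityMeasure (S × A1)) × (W → ProbabilityMeasure S))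
    (t : Fin T) (f : S → W → ℝ) (q : S × W × A1) : ℝ :=
  ∑ u' : W, pi0c P0c t q.2.1 (α0 t q.2.1) (μf.1 t q.2.1) u' *
    ∫ x', f x' u' ∂(P1c t q.1 q.2.1 q.2.2 (μf.1 t q.2.1) : Measure S)

/-- `C(α⁰,μ)`: state-action flows consistent with the controlled dynamics and the
initial law `m₀*` (expressed through bounded continuous test functions). -/
def Cset (m0 : ProbabilityMeasure (S × W))
    (α0 : Fin T → W → ProbabilityMeasure A0)
    (μf : (Fin T → W → ProbabilityMeasure (S × A1)) × (W → ProbabilityMeasure S)) :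
    Set ((Fin T → ProbabilityMeasure (S × W × A1)) × ProbabilityMeasure (S × W)) :=
  {v |
    (∀ h : 0 < T, ∀ f : S → W → ℝ, Continuous (fun q : S × W => f q.1 q.2) →
      ∫ q : S × W × A1, f q.1 q.2.1 ∂(v.1 ⟨0, h⟩ : Measure (S × W × A1)) =
        ∫ q : S × W, f q.1 q.2 ∂(m0 : Measure (S × W))) ∧
    (∀ (t : Fin T) (h : (t : ℕ) + 1 < T),
      ∀ f : S → W → ℝ, Continuous (fun q : S × W => f q.1 q.2) →
      ∫ q : S × W × A1, f q.1 q.2.1 ∂(v.1 ⟨(t : ℕ) + 1, h⟩ : Measure (S × W × A1)) =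
        ∫ q, stepTest P0c P1c α0 μf t f q ∂(v.1 t : Measure (S × W × A1))) ∧
    (∀ h : 0 < T, ∀ f : S → W → ℝ, Continuous (fun q : S × W => f q.1 q.2) →
      ∫ q : S × W, f q.1 q.2 ∂(v.2 : Measure (S × W)) =
        ∫ q, stepTest P0c P1c α0 μf ⟨T - 1, Nat.sub_lt h Nat.one_pos⟩ f q
          ∂(v.1 ⟨T - 1, Nat.sub_lt h Nat.one_pos⟩ : Measure (S × W × A1)))}

/-- `D(α⁰,μ) = B(α⁰,μ) ∩ C(α⁰,μ)`: the optimal state-action flows of the minor player. -/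
def Dset (m0 : ProbabilityMeasure (S × W))
    (α0 : Fin T → W → ProbabilityMeasure A0)
    (μf : (Fin T → W → ProbabilityMeasure (S × A1)) × (W → ProbabilityMeasure S)) :
    Set ((Fin T → ProbabilityMeasure (S × W × A1)) × ProbabilityMeasure (S × W)) :=
  Bset P0c P1c f1 g1 α0 μf ∩ Cset P0c P1c m0 α0 μf

/-- The conditioning mapping `Γ : 𝒱 → 2^{C_μ}`, sending a state-action flow `v` to all
mean-field flows `μ` obtained by disintegrating `v` over the major player's coordinate:
`v_t(dx,du,da) = μ_t(u)(dx,da) (v_t|_W)(du)` for `t < T` and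
`v_T(dx,du) = μ_T(u)(dx) (v_T|_W)(du)`. -/
def Gammac (v : (Fin T → ProbabilityMeasure (S × W × A1)) × ProbabilityMeasure (S × W)) :
    Set ((Fin T → W → ProbabilityMeasure (S × A1)) × (W → ProbabilityMeasure S)) :=
  {μf | (∀ (t : Fin T) (u : W) (B : Set (S × A1)), MeasurableSet B →
      (v.1 t : Measure (S × W × A1)) {q : S × W × A1 | (q.1, q.2.2) ∈ B ∧ q.2.1 = u} =
        (μf.1 t u : Measure (S × A1)) B *
          (v.1 t : Measure (S × W × A1)) {q : S × W × A1 | q.2.1 = u}) ∧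
    (∀ (u : W) (B : Set S), MeasurableSet B →
      (v.2 : Measure (S × W)) (B ×ˢ ({u} : Set W)) =
        (μf.2 u : Measure S) B *
          (v.2 : Measure (S × W)) (Set.univ ×ˢ ({u} : Set W)))}

end ControlFramework

open scoped BoundedContinuousFunction

section GenAux

variable {X E : Type*}

lemma cont_integrable [MeasurableSpace X] [TopologicalSpace X] [OpensMeasurableSpace X]
    [CompactSpace X] [T2Space X] {μ : Measure X} [IsFiniteMeasure μ] {f : X → ℝ}
    (hf : Continuous f) : Integrable f μ :=
  hf.integrable_of_hasCompactSupport (HasCompactSupport.of_compactSpace f)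

lemma integrable_of_eqs {Ω : Type*} [MeasurableSpace Ω] {ν : Measure Ω} {F ψ : Ω → ℝ}
    (hψ : Integrable ψ ν) {r : ℝ} (h1 : ∫ q, F q ∂ν = r)
    (h2 : ∫ q, (F q + ψ q) ∂ν = r + 1) : Integrable F ν := by
  by_contra h
  have e1 : ∫ q, F q ∂ν = 0 := integral_undef h
  have h' : ¬ Integrable (fun q => F q + ψ q) ν := fun hi => h (by have := hi.sub hψ; simpa [Pi.sub_def] using this)
  have e2 : ∫ q, (F q + ψ q) ∂ν = 0 := integral_undef h'
  rw [e1] at h1; rw [e2] at h2; linarith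

lemma exists_cond [MeasurableSpace X] [MeasurableSpace E] [Nonempty E]
    (ν : ProbabilityMeasure X) (π : X → E) (hπ : Measurable π) (A : Set X)
    (hA : MeasurableSet A) :
    ∃ μ : ProbabilityMeasure E, ∀ B : Set E, MeasurableSet B →
      (ν : Measure X) (π ⁻¹' B ∩ A) = (μ : Measure E) B * (ν : Measure X) A := by
  by_cases hc : (ν : Measure X) A = 0
  · refine ⟨⟨Measure.dirac (Classical.arbitrary E), inferInstance⟩, fun B hB => ?_⟩
    have h0 : (ν : Measure X) (π ⁻¹' B ∩ A) = 0 :=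
      measure_mono_null Set.inter_subset_right hc
    rw [h0, hc, mul_zero]
  · have hfin : (ν : Measure X) A ≠ ⊤ := measure_ne_top _ _
    set m : Measure E := Measure.map π ((ν : Measure X).restrict A) with hm
    have hmB : ∀ B : Set E, MeasurableSet B → m B = (ν : Measure X) (π ⁻¹' B ∩ A) := by
      intro B hB
      rw [hm, Measure.map_apply hπ hB, Measure.restrict_apply (hπ hB)]
    have huniv : m Set.univ = (ν : Measure X) A := by
      rw [hmB Set.univ MeasurableSet.univ]; simp
    refine ⟨⟨((ν : Measure X) A)⁻¹ • m, ⟨?_⟩⟩, fun B hB => ?_⟩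
    · rw [Measure.smul_apply, huniv, smul_eq_mul, ENNReal.inv_mul_cancel hc hfin]
    · show (ν : Measure X) (π ⁻¹' B ∩ A) = (((ν : Measure X) A)⁻¹ • m) B * (ν : Measure X) A
      rw [Measure.smul_apply, smul_eq_mul, mul_right_comm,
        ENNReal.inv_mul_cancel hc hfin, one_mul, hmB B hB]

end GenAux

section Slice

variable {X E : Type*} [MeasurableSpace X] [TopologicalSpace X] [OpensMeasurableSpace X]
  [MeasurableSpace E] [TopologicalSpace E] [OpensMeasurableSpace E]
  [HasOuterApproxClosed E] [BorelSpace E]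

/-- indicator of a clopen set times a bounded continuous function, as a BCF. -/
noncomputable def clopenCut (π : X → E) (hπ : Continuous π) (A : Set X) (hA : IsClopen A)
    (f : E →ᵇ ℝ≥0) : X →ᵇ ℝ≥0 := by
  refine ⟨⟨fun x => A.indicator (fun x => f (π x)) x, ?_⟩, ?_⟩
  · classical
    have : (fun x => A.indicator (fun x => f (π x)) x)
        = fun x => if x ∈ A then f (π x) else 0 := by
      funext x; simp [Set.indicator_apply]
    rw [this]
    exact Continuous.if (by simp [hA.frontier_eq]) ((map_continuous f).comp hπ)
      continuous_const
  · refine ⟨2 * nndist f 0, fun x y => ?_⟩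
    have hb : ∀ z : X, A.indicator (fun x => f (π x)) z ≤ nndist f 0 := by
      intro z
      classical
      rw [Set.indicator_apply]
      split_ifs
      · exact BoundedContinuousFunction.NNReal.upper_bound f (π z)
      · exact zero_le
    calc dist (A.indicator (fun x => f (π x)) x) (A.indicator (fun x => f (π x)) y)
        ≤ dist (A.indicator (fun x => f (π x)) x) 0
            + dist (A.indicator (fun x => f (π x)) y) 0 := dist_triangle_right _ _ _
      _ ≤ (nndist f 0 : ℝ) + (nndist f 0 : ℝ) := by
          have hbd : ∀ z : X, dist (A.indicator (fun x => f (π x)) z) 0 ≤ (nndist f 0 : ℝ) := by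
            intro z
            rw [NNReal.dist_eq, NNReal.coe_zero, sub_zero,
              abs_of_nonneg (NNReal.coe_nonneg _)]
            exact_mod_cast hb z
          gcongr <;> exact hbd _
      _ = 2 * nndist f 0 := by ring

lemma clopenCut_apply (π : X → E) (hπ : Continuous π) (A : Set X) (hA : IsClopen A)
    (f : E →ᵇ ℝ≥0) (x : X) :
    clopenCut π hπ A hA f x = A.indicator (fun x => f (π x)) x := rfl

lemma clopenCut_lintegral (π : X → E) (hπ : Continuous π) (A : Set X) (hA : IsClopen A)
    (f : E →ᵇ ℝ≥0) (m : Measure X) :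
    ∫⁻ x, clopenCut π hπ A hA f x ∂m = ∫⁻ e, f e ∂(Measure.map π (m.restrict A)) := by
  classical
  have hAm : MeasurableSet A := hA.2.measurableSet
  rw [lintegral_map ((map_continuous f).measurable.coe_nnreal_ennreal) hπ.measurable,
    ← lintegral_indicator hAm]
  congr 1
  funext x
  by_cases hx : x ∈ A <;> simp [clopenCut_apply, hx]

lemma slice_limit [Nonempty E]
    (π : X → E) (hπ : Continuous π) (A : Set X) (hA : IsClopen A)
    {νn : ℕ → ProbabilityMeasure X} {ν : ProbabilityMeasure X} (hν : Tendsto νn atTop (𝓝 ν))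
    {μn : ℕ → ProbabilityMeasure E} {μ : ProbabilityMeasure E} (hμ : Tendsto μn atTop (𝓝 μ))
    (h : ∀ n (B : Set E), MeasurableSet B →
      (νn n : Measure X) (π ⁻¹' B ∩ A) = (μn n : Measure E) B * (νn n : Measure X) A) :
    ∀ B : Set E, MeasurableSet B →
      (ν : Measure X) (π ⁻¹' B ∩ A) = (μ : Measure E) B * (ν : Measure X) A := by
  classical
  have hAm : MeasurableSet A := hA.2.measurableSet
  set ρn : ℕ → Measure E := fun n => Measure.map π (((νn n : Measure X)).restrict A) with hρn
  set ρ : Measure E := Measure.map π (((ν : Measure X)).restrict A) with hρ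
  have hmapap : ∀ (m : Measure X) (B : Set E), MeasurableSet B →
      Measure.map π (m.restrict A) B = m (π ⁻¹' B ∩ A) := by
    intro m B hB
    rw [Measure.map_apply hπ.measurable hB, Measure.restrict_apply (hπ.measurable hB)]
  have hρneq : ∀ n, ρn n = ((νn n : Measure X) A) • (μn n : Measure E) := by
    intro n
    refine Measure.ext fun B hB => ?_
    rw [hρn, hmapap _ B hB, h n B hB, Measure.smul_apply, smul_eq_mul, mul_comm]
  -- main convergence of lintegrals against ρn
  have hmain : ∀ f : E →ᵇ ℝ≥0,
      Tendsto (fun n => ∫⁻ e, f e ∂(ρn n)) atTop (𝓝 (∫⁻ e, f e ∂ρ)) := by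
    intro f
    have := (ProbabilityMeasure.tendsto_iff_forall_lintegral_tendsto.mp hν)
      (clopenCut π hπ A hA f)
    simpa only [clopenCut_lintegral] using this
  -- convergence of masses of A
  have hc : Tendsto (fun n => (νn n : Measure X) A) atTop (𝓝 ((ν : Measure X) A)) := by
    have h1 := hmain (BoundedContinuousFunction.const E (1 : ℝ≥0))
    have huniv : ∀ (m : Measure X), ∫⁻ e, (BoundedContinuousFunction.const E (1 : ℝ≥0)) e
        ∂(Measure.map π (m.restrict A)) = m A := by
      intro m
      simp only [BoundedContinuousFunction.const_apply, ENNReal.coe_one, lintegral_one]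
      rw [Measure.map_apply hπ.measurable MeasurableSet.univ,
        Measure.restrict_apply (hπ.measurable MeasurableSet.univ)]
      simp
    simpa only [hρn, hρ, huniv] using h1
  -- identify the limit
  have hkey : ∀ f : E →ᵇ ℝ≥0, ∫⁻ e, f e ∂ρ = ∫⁻ e, f e ∂(((ν : Measure X) A) • (μ : Measure E)) := by
    intro f
    have h2 : Tendsto (fun n => ∫⁻ e, f e ∂(ρn n)) atTop
        (𝓝 (((ν : Measure X) A) * ∫⁻ e, f e ∂(μ : Measure E))) := by
      have heq : ∀ n, ∫⁻ e, f e ∂(ρn n) = ((νn n : Measure X) A) * ∫⁻ e, f e ∂(μn n : Measure E) := by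
        intro n; rw [hρneq n, lintegral_smul_measure, smul_eq_mul]
      rw [show (fun n => ∫⁻ e, f e ∂(ρn n)) =
        fun n => ((νn n : Measure X) A) * ∫⁻ e, f e ∂(μn n : Measure E) from funext heq]
      exact ENNReal.Tendsto.mul hc (Or.inr (BoundedContinuousFunction.lintegral_lt_top_of_nnreal _ f).ne)
        ((ProbabilityMeasure.tendsto_iff_forall_lintegral_tendsto.mp hμ) f)
        (Or.inr (measure_ne_top _ _))
    rw [lintegral_smul_measure]
    exact tendsto_nhds_unique (hmain f) h2
  have hfin : IsFiniteMeasure ρ := by infer_instance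
  have hρfinal : ρ = ((ν : Measure X) A) • (μ : Measure E) :=
    ext_of_forall_lintegral_eq_of_IsFiniteMeasure hkey
  intro B hB
  rw [← hmapap (ν : Measure X) B hB, ← hρ, hρfinal, Measure.smul_apply, smul_eq_mul, mul_comm]

end Slice


section FrameworkAux

variable {S W A0 A1 : Type*}
variable [MetricSpace S] [CompactSpace S] [Nonempty S]
  [MeasurableSpace S] [BorelSpace S] [SecondCountableTopology S]
variable [Fintype W] [Nonempty W] [TopologicalSpace W] [DiscreteTopology W]
  [MeasurableSpace W] [BorelSpace W]
variable [MetricSpace A0] [CompactSpace A0] [Nonempty A0] [MeasurableSpace A0] [BorelSpace A0]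
variable [MetricSpace A1] [CompactSpace A1] [Nonempty A1] [MeasurableSpace A1] [BorelSpace A1]
  [SecondCountableTopology A1]
variable {T : ℕ}
variable (P0c : Fin T → W → A0 → ProbabilityMeasure (S × A1) → ProbabilityMeasure W)
variable (P1c : Fin T → S → W → A1 → ProbabilityMeasure (S × A1) → ProbabilityMeasure S)
variable (f1 : Fin T → S → W → A1 → ProbabilityMeasure (S × A1) → ℝ)
variable (g1 : S → W → ProbabilityMeasure S → ℝ)

/-- A convex combination of two probability measures. -/
noncomputable def mixPM {X : Type*} [MeasurableSpace X] (a b : ℝ≥0) (hab : a + b = 1)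
    (P Q : ProbabilityMeasure X) : ProbabilityMeasure X :=
  ⟨(a : ℝ≥0∞) • (P : Measure X) + (b : ℝ≥0∞) • (Q : Measure X), by
    constructor
    rw [Measure.add_apply, Measure.smul_apply, Measure.smul_apply, measure_univ, measure_univ,
      smul_eq_mul, smul_eq_mul, mul_one, mul_one, ← ENNReal.coe_add, hab, ENNReal.coe_one]⟩

lemma mixPM_coe {X : Type*} [MeasurableSpace X] (a b : ℝ≥0) (hab : a + b = 1)
    (P Q : ProbabilityMeasure X) :
    (mixPM a b hab P Q : Measure X) = (a : ℝ≥0∞) • (P : Measure X) + (b : ℝ≥0∞) • (Q : Measure X) :=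
  rfl

lemma integral_mix {Ω : Type*} [MeasurableSpace Ω] {P Q : Measure Ω} (a b : ℝ≥0) {F : Ω → ℝ}
    (hP : Integrable F P) (hQ : Integrable F Q) :
    ∫ q, F q ∂((a : ℝ≥0∞) • P + (b : ℝ≥0∞) • Q)
      = (a : ℝ) * ∫ q, F q ∂P + (b : ℝ) * ∫ q, F q ∂Q := by
  rw [integral_add_measure (hP.smul_measure ENNReal.coe_ne_top)
    (hQ.smul_measure ENNReal.coe_ne_top), integral_smul_measure, integral_smul_measure]
  simp [smul_eq_mul]

lemma stepTest_snd (α0 : Fin T → W → ProbabilityMeasure A0)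
    (μf : (Fin T → W → ProbabilityMeasure (S × A1)) × (W → ProbabilityMeasure S))
    (t : Fin T) (φ : W → ℝ) (q : S × W × A1) :
    stepTest P0c P1c α0 μf t (fun _ u => φ u) q
      = ∑ u' : W, pi0c P0c t q.2.1 (α0 t q.2.1) (μf.1 t q.2.1) u' * φ u' := by
  simp [stepTest, integral_const]

lemma stepTest_add_one (α0 : Fin T → W → ProbabilityMeasure A0)
    (μf : (Fin T → W → ProbabilityMeasure (S × A1)) × (W → ProbabilityMeasure S))
    (t : Fin T) {f : S → W → ℝ} (hf : Continuous fun q : S × W => f q.1 q.2) (q : S × W × A1) :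
    stepTest P0c P1c α0 μf t (fun x u => f x u + 1) q
      = stepTest P0c P1c α0 μf t f q
        + ∑ u' : W, pi0c P0c t q.2.1 (α0 t q.2.1) (μf.1 t q.2.1) u' := by
  have hint : ∀ (u' : W) (m : Measure S), IsProbabilityMeasure m →
      ∫ x', (f x' u' + 1) ∂m = (∫ x', f x' u' ∂m) + 1 := by
    intro u' m hm
    have hfc : Continuous fun x' : S => f x' u' :=
      hf.comp (continuous_id.prodMk continuous_const)
    rw [integral_add (cont_integrable hfc) (integrable_const 1), integral_const]
    simp
  simp only [stepTest]
  rw [← Finset.sum_add_distrib]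
  congr 1
  funext u'
  rw [hint u' _ inferInstance, mul_add, mul_one]

lemma psi_integrable (α0 : Fin T → W → ProbabilityMeasure A0)
    (μf : (Fin T → W → ProbabilityMeasure (S × A1)) × (W → ProbabilityMeasure S))
    (t : Fin T) (ν : Measure (S × W × A1)) [IsFiniteMeasure ν] :
    Integrable (fun q : S × W × A1 =>
      ∑ u' : W, pi0c P0c t q.2.1 (α0 t q.2.1) (μf.1 t q.2.1) u') ν := by
  have hmeas : Measurable (fun q : S × W × A1 =>
      ∑ u' : W, pi0c P0c t q.2.1 (α0 t q.2.1) (μf.1 t q.2.1) u') :=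
    (measurable_of_countable (fun u : W => ∑ u' : W, pi0c P0c t u (α0 t u) (μf.1 t u) u')).comp
      (measurable_fst.comp measurable_snd)
  have hbd : ∀ q : S × W × A1,
      ‖∑ u' : W, pi0c P0c t q.2.1 (α0 t q.2.1) (μf.1 t q.2.1) u'‖ ≤ (Fintype.card W : ℝ) := by
    intro q
    have hterm : ∀ u' : W, ‖pi0c P0c t q.2.1 (α0 t q.2.1) (μf.1 t q.2.1) u'‖ ≤ 1 := by
      intro u'
      have hptw : ∀ a : A0,
          ‖((P0c t q.2.1 a (μf.1 t q.2.1) : Measure W) {u'}).toReal‖ ≤ 1 := by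
        intro a
        rw [Real.norm_eq_abs, abs_of_nonneg ENNReal.toReal_nonneg]
        have h := prob_le_one (μ := (P0c t q.2.1 a (μf.1 t q.2.1) : Measure W)) (s := {u'})
        have h2 := ENNReal.toReal_mono ENNReal.one_ne_top h
        simpa using h2
      have hni := norm_integral_le_of_norm_le_const
        (μ := ((α0 t q.2.1) : Measure A0))
        (f := fun a => ((P0c t q.2.1 a (μf.1 t q.2.1) : Measure W) {u'}).toReal)
        (C := 1) (Filter.Eventually.of_forall hptw)
      simpa [pi0c, measure_univ] using hni
    calc ‖∑ u' : W, pi0c P0c t q.2.1 (α0 t q.2.1) (μf.1 t q.2.1) u'‖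
        ≤ ∑ u' : W, ‖pi0c P0c t q.2.1 (α0 t q.2.1) (μf.1 t q.2.1) u'‖ := norm_sum_le _ _
      _ ≤ ∑ _u' : W, (1 : ℝ) := Finset.sum_le_sum fun u' _ => hterm u'
      _ = (Fintype.card W : ℝ) := by
          simp [Finset.sum_const, Finset.card_univ]
  exact (integrable_const (Fintype.card W : ℝ)).mono' hmeas.aestronglyMeasurable
    (Filter.Eventually.of_forall hbd)

lemma integrable_stepTest_aux (α0 : Fin T → W → ProbabilityMeasure A0)
    (μf : (Fin T → W → ProbabilityMeasure (S × A1)) × (W → ProbabilityMeasure S))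
    (t : Fin T) (ν : Measure (S × W × A1)) [IsProbabilityMeasure ν]
    {f : S → W → ℝ} (hf : Continuous fun q : S × W => f q.1 q.2) {r : ℝ}
    (h1 : ∫ q, stepTest P0c P1c α0 μf t f q ∂ν = r)
    (h2 : ∫ q, stepTest P0c P1c α0 μf t (fun x u => f x u + 1) q ∂ν = r + 1) :
    Integrable (stepTest P0c P1c α0 μf t f) ν := by
  have heq : (fun q => stepTest P0c P1c α0 μf t (fun x u => f x u + 1) q)
      = fun q => stepTest P0c P1c α0 μf t f q
        + ∑ u' : W, pi0c P0c t q.2.1 (α0 t q.2.1) (μf.1 t q.2.1) u' :=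
    funext fun q => stepTest_add_one P0c P1c α0 μf t hf q
  rw [heq] at h2
  exact integrable_of_eqs (psi_integrable P0c α0 μf t ν) h1 h2

end FrameworkAux



section FrameworkAux2

set_option linter.unusedSectionVars false

variable {S W A0 A1 : Type*}
variable [MetricSpace S] [CompactSpace S] [Nonempty S]
  [MeasurableSpace S] [BorelSpace S] [SecondCountableTopology S]
variable [Fintype W] [Nonempty W] [TopologicalSpace W] [DiscreteTopology W]
  [MeasurableSpace W] [BorelSpace W]
variable [MetricSpace A0] [CompactSpace A0] [Nonempty A0] [MeasurableSpace A0] [BorelSpace A0]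
variable [MetricSpace A1] [CompactSpace A1] [Nonempty A1] [MeasurableSpace A1] [BorelSpace A1]
  [SecondCountableTopology A1]
variable {T : ℕ}
variable (P0c : Fin T → W → A0 → ProbabilityMeasure (S × A1) → ProbabilityMeasure W)
variable (P1c : Fin T → S → W → A1 → ProbabilityMeasure (S × A1) → ProbabilityMeasure S)
variable (f1 : Fin T → S → W → A1 → ProbabilityMeasure (S × A1) → ℝ)
variable (g1 : S → W → ProbabilityMeasure S → ℝ)
variable (m0 : ProbabilityMeasure (S × W))
variable (α0 : Fin T → W → ProbabilityMeasure A0)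
variable (μf : (Fin T → W → ProbabilityMeasure (S × A1)) × (W → ProbabilityMeasure S))

/-- All elements of `C(α⁰,μ)` have the same `W`-marginals at every time. -/
lemma marg_fin {v w : (Fin T → ProbabilityMeasure (S × W × A1)) × ProbabilityMeasure (S × W)}
    (hv : v ∈ Cset P0c P1c m0 α0 μf) (hw : w ∈ Cset P0c P1c m0 α0 μf) :
    ∀ (k : ℕ) (h : k < T) (φ : W → ℝ),
      ∫ q, φ q.2.1 ∂(v.1 ⟨k, h⟩ : Measure (S × W × A1))
        = ∫ q, φ q.2.1 ∂(w.1 ⟨k, h⟩ : Measure (S × W × A1)) := by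
  intro k
  induction k with
  | zero =>
    intro h φ
    have hcont : Continuous fun q : S × W => (fun (_ : S) (u : W) => φ u) q.1 q.2 :=
      continuous_of_discreteTopology.comp continuous_snd
    have h1 := hv.1 h (fun _ u => φ u) hcont
    have h2 := hw.1 h (fun _ u => φ u) hcont
    simpa using h1.trans h2.symm
  | succ k ih =>
    intro h φ
    have hk : k < T := Nat.lt_of_succ_lt h
    set t : Fin T := ⟨k, hk⟩ with ht
    have hcont : Continuous fun q : S × W => (fun (_ : S) (u : W) => φ u) q.1 q.2 :=
      continuous_of_discreteTopology.comp continuous_snd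
    have h1 := hv.2.1 t h (fun _ u => φ u) hcont
    have h2 := hw.2.1 t h (fun _ u => φ u) hcont
    have hst : ∀ (ν : Measure (S × W × A1)),
        ∫ q, stepTest P0c P1c α0 μf t (fun _ u => φ u) q ∂ν
          = ∫ q, (fun u : W => ∑ u' : W,
              pi0c P0c t u (α0 t u) (μf.1 t u) u' * φ u') q.2.1 ∂ν := by
      intro ν
      congr 1
      funext q
      exact stepTest_snd P0c P1c α0 μf t φ q
    rw [hst] at h1 h2
    have hih := ih hk (fun u : W => ∑ u' : W, pi0c P0c t u (α0 t u) (μf.1 t u) u' * φ u')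
    have : (⟨(t : ℕ) + 1, h⟩ : Fin T) = ⟨k + 1, h⟩ := rfl
    rw [this] at h1 h2
    simpa using h1.trans (hih.trans h2.symm)

lemma marg_term {v w : (Fin T → ProbabilityMeasure (S × W × A1)) × ProbabilityMeasure (S × W)}
    (hv : v ∈ Cset P0c P1c m0 α0 μf) (hw : w ∈ Cset P0c P1c m0 α0 μf) (hT : 0 < T) :
    ∀ φ : W → ℝ,
      ∫ q, φ q.2 ∂(v.2 : Measure (S × W)) = ∫ q, φ q.2 ∂(w.2 : Measure (S × W)) := by
  intro φ
  have hcont : Continuous fun q : S × W => (fun (_ : S) (u : W) => φ u) q.1 q.2 :=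
    continuous_of_discreteTopology.comp continuous_snd
  have h1 := hv.2.2 hT (fun _ u => φ u) hcont
  have h2 := hw.2.2 hT (fun _ u => φ u) hcont
  set t : Fin T := ⟨T - 1, Nat.sub_lt hT Nat.one_pos⟩ with ht
  have hst : ∀ (ν : Measure (S × W × A1)),
      ∫ q, stepTest P0c P1c α0 μf t (fun _ u => φ u) q ∂ν
        = ∫ q, (fun u : W => ∑ u' : W,
            pi0c P0c t u (α0 t u) (μf.1 t u) u' * φ u') q.2.1 ∂ν := by
    intro ν
    congr 1
    funext q
    exact stepTest_snd P0c P1c α0 μf t φ q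
  rw [hst] at h1 h2
  have hih := marg_fin P0c P1c m0 α0 μf hv hw (T - 1) (Nat.sub_lt hT Nat.one_pos)
    (fun u : W => ∑ u' : W, pi0c P0c t u (α0 t u) (μf.1 t u) u' * φ u')
  simpa using h1.trans (hih.trans h2.symm)

lemma integral_mem_indicator {Ω : Type*} [MeasurableSpace Ω] (ν : Measure Ω) [IsFiniteMeasure ν]
    {A : Set Ω} (hA : MeasurableSet A) (F : Ω → Prop) (hF : ∀ q, F q ↔ q ∈ A)
    [∀ q, Decidable (F q)] :
    ∫ q, (if F q then (1 : ℝ) else 0) ∂ν = (ν A).toReal := by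
  have : (fun q => if F q then (1 : ℝ) else 0) = A.indicator (fun _ => (1 : ℝ)) := by
    funext q
    by_cases hq : F q
    · rw [if_pos hq, Set.indicator_of_mem ((hF q).mp hq)]
    · rw [if_neg hq, Set.indicator_of_notMem (fun hmem => hq ((hF q).mpr hmem))]
  rw [this, integral_indicator_const _ hA, smul_eq_mul, mul_one]
  rfl

lemma marg_fin_set {v w : (Fin T → ProbabilityMeasure (S × W × A1)) × ProbabilityMeasure (S × W)}
    (hv : v ∈ Cset P0c P1c m0 α0 μf) (hw : w ∈ Cset P0c P1c m0 α0 μf) (t : Fin T) (u : W) :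
    (v.1 t : Measure (S × W × A1)) {q | q.2.1 = u}
      = (w.1 t : Measure (S × W × A1)) {q | q.2.1 = u} := by
  classical
  have hA : MeasurableSet {q : S × W × A1 | q.2.1 = u} :=
    (measurable_fst.comp measurable_snd) (measurableSet_singleton u)
  have key := marg_fin P0c P1c m0 α0 μf hv hw t t.isLt
    (fun u' : W => if u' = u then (1 : ℝ) else 0)
  have hv' : ∫ q, (if q.2.1 = u then (1 : ℝ) else 0) ∂(v.1 ⟨t, t.isLt⟩ : Measure (S × W × A1))
      = ((v.1 ⟨t, t.isLt⟩ : Measure (S × W × A1)) {q | q.2.1 = u}).toReal :=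
    integral_mem_indicator _ hA _ (fun q => Iff.rfl)
  have hw' : ∫ q, (if q.2.1 = u then (1 : ℝ) else 0) ∂(w.1 ⟨t, t.isLt⟩ : Measure (S × W × A1))
      = ((w.1 ⟨t, t.isLt⟩ : Measure (S × W × A1)) {q | q.2.1 = u}).toReal :=
    integral_mem_indicator _ hA _ (fun q => Iff.rfl)
  rw [hv', hw'] at key
  have := (ENNReal.toReal_eq_toReal_iff' (measure_ne_top _ _) (measure_ne_top _ _)).mp key
  simpa [Fin.eta] using this

lemma marg_term_set {v w : (Fin T → ProbabilityMeasure (S × W × A1)) × ProbabilityMeasure (S × W)}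
    (hv : v ∈ Cset P0c P1c m0 α0 μf) (hw : w ∈ Cset P0c P1c m0 α0 μf) (hT : 0 < T) (u : W) :
    (v.2 : Measure (S × W)) (Set.univ ×ˢ {u}) = (w.2 : Measure (S × W)) (Set.univ ×ˢ {u}) := by
  classical
  have hA : MeasurableSet ((Set.univ : Set S) ×ˢ ({u} : Set W)) :=
    MeasurableSet.univ.prod (measurableSet_singleton u)
  have key := marg_term P0c P1c m0 α0 μf hv hw hT
    (fun u' : W => if u' = u then (1 : ℝ) else 0)
  have hmemiff : ∀ q : S × W, (q.2 = u) ↔ q ∈ (Set.univ : Set S) ×ˢ ({u} : Set W) := by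
    intro q
    simp only [Set.mem_prod, Set.mem_univ, Set.mem_singleton_iff, true_and]
  have hv' := integral_mem_indicator (v.2 : Measure (S × W)) hA (fun q => q.2 = u) hmemiff
  have hw' := integral_mem_indicator (w.2 : Measure (S × W)) hA (fun q => q.2 = u) hmemiff
  rw [hv', hw'] at key
  exact (ENNReal.toReal_eq_toReal_iff' (measure_ne_top _ _) (measure_ne_top _ _)).mp key

end FrameworkAux2


section FrameworkAux3

set_option linter.unusedSectionVars false

variable {S W A0 A1 : Type*}
variable [MetricSpace S] [CompactSpace S] [Nonempty S]
  [MeasurableSpace S] [BorelSpace S] [SecondCountableTopology S]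
variable [Fintype W] [Nonempty W] [TopologicalSpace W] [DiscreteTopology W]
  [MeasurableSpace W] [BorelSpace W]
variable [MetricSpace A0] [CompactSpace A0] [Nonempty A0] [MeasurableSpace A0] [BorelSpace A0]
variable [MetricSpace A1] [CompactSpace A1] [Nonempty A1] [MeasurableSpace A1] [BorelSpace A1]
  [SecondCountableTopology A1]
variable {T : ℕ}
variable (P0c : Fin T → W → A0 → ProbabilityMeasure (S × A1) → ProbabilityMeasure W)
variable (P1c : Fin T → S → W → A1 → ProbabilityMeasure (S × A1) → ProbabilityMeasure S)
variable (f1 : Fin T → S → W → A1 → ProbabilityMeasure (S × A1) → ℝ)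
variable (g1 : S → W → ProbabilityMeasure S → ℝ)
variable (m0 : ProbabilityMeasure (S × W))
variable (α0 : Fin T → W → ProbabilityMeasure A0)
variable (μf : (Fin T → W → ProbabilityMeasure (S × A1)) × (W → ProbabilityMeasure S))

lemma integrable_stepTest_cond2
    {v : (Fin T → ProbabilityMeasure (S × W × A1)) × ProbabilityMeasure (S × W)}
    (hv : v ∈ Cset P0c P1c m0 α0 μf) (t : Fin T) (h : (t : ℕ) + 1 < T)
    {f : S → W → ℝ} (hf : Continuous fun q : S × W => f q.1 q.2) :
    Integrable (stepTest P0c P1c α0 μf t f) (v.1 t : Measure (S × W × A1)) := by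
  have hfc1 : Continuous fun q : S × W × A1 => f q.1 q.2.1 :=
    hf.comp (continuous_fst.prodMk (continuous_fst.comp continuous_snd))
  have h1 : ∫ q, stepTest P0c P1c α0 μf t f q ∂(v.1 t : Measure (S × W × A1))
      = ∫ q, f q.1 q.2.1 ∂(v.1 ⟨(t : ℕ) + 1, h⟩ : Measure (S × W × A1)) :=
    (hv.2.1 t h f hf).symm
  have h2 : ∫ q, stepTest P0c P1c α0 μf t (fun x u => f x u + 1) q
        ∂(v.1 t : Measure (S × W × A1))
      = (∫ q, f q.1 q.2.1 ∂(v.1 ⟨(t : ℕ) + 1, h⟩ : Measure (S × W × A1))) + 1 := by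
    have := (hv.2.1 t h (fun x u => f x u + 1) (hf.add continuous_const)).symm
    rw [this, integral_add (cont_integrable hfc1) (integrable_const 1), integral_const]
    simp
  exact integrable_stepTest_aux P0c P1c α0 μf t _ hf h1 h2

lemma integrable_stepTest_cond3
    {v : (Fin T → ProbabilityMeasure (S × W × A1)) × ProbabilityMeasure (S × W)}
    (hv : v ∈ Cset P0c P1c m0 α0 μf) (h : 0 < T)
    {f : S → W → ℝ} (hf : Continuous fun q : S × W => f q.1 q.2) :
    Integrable (stepTest P0c P1c α0 μf ⟨T - 1, Nat.sub_lt h Nat.one_pos⟩ f)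
      (v.1 ⟨T - 1, Nat.sub_lt h Nat.one_pos⟩ : Measure (S × W × A1)) := by
  have h1 : ∫ q, stepTest P0c P1c α0 μf ⟨T - 1, Nat.sub_lt h Nat.one_pos⟩ f q
        ∂(v.1 ⟨T - 1, Nat.sub_lt h Nat.one_pos⟩ : Measure (S × W × A1))
      = ∫ q, f q.1 q.2 ∂(v.2 : Measure (S × W)) := (hv.2.2 h f hf).symm
  have h2 : ∫ q, stepTest P0c P1c α0 μf ⟨T - 1, Nat.sub_lt h Nat.one_pos⟩ (fun x u => f x u + 1) q
        ∂(v.1 ⟨T - 1, Nat.sub_lt h Nat.one_pos⟩ : Measure (S × W × A1))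
      = (∫ q, f q.1 q.2 ∂(v.2 : Measure (S × W))) + 1 := by
    have := (hv.2.2 h (fun x u => f x u + 1) (hf.add continuous_const)).symm
    rw [this, integral_add (cont_integrable hf) (integrable_const 1), integral_const]
    simp
  exact integrable_stepTest_aux P0c P1c α0 μf _ _ hf h1 h2

lemma mix_mem_Cset
    {v w : (Fin T → ProbabilityMeasure (S × W × A1)) × ProbabilityMeasure (S × W)}
    (hv : v ∈ Cset P0c P1c m0 α0 μf) (hw : w ∈ Cset P0c P1c m0 α0 μf)
    (a b : ℝ≥0) (hab : a + b = 1) :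
    (fun t => mixPM a b hab (v.1 t) (w.1 t), mixPM a b hab v.2 w.2)
      ∈ Cset P0c P1c m0 α0 μf := by
  have hab' : (a : ℝ) + (b : ℝ) = 1 := by exact_mod_cast congrArg NNReal.toReal hab
  refine ⟨?_, ?_, ?_⟩
  · intro h f hf
    have hfc1 : Continuous fun q : S × W × A1 => f q.1 q.2.1 :=
      hf.comp (continuous_fst.prodMk (continuous_fst.comp continuous_snd))
    show ∫ q, f q.1 q.2.1 ∂(mixPM a b hab (v.1 ⟨0, h⟩) (w.1 ⟨0, h⟩) : Measure (S × W × A1)) = _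
    rw [mixPM_coe, integral_mix a b (cont_integrable hfc1) (cont_integrable hfc1),
      hv.1 h f hf, hw.1 h f hf, ← add_mul, hab', one_mul]
  · intro t h f hf
    have hfc1 : Continuous fun q : S × W × A1 => f q.1 q.2.1 :=
      hf.comp (continuous_fst.prodMk (continuous_fst.comp continuous_snd))
    show ∫ q, f q.1 q.2.1
          ∂(mixPM a b hab (v.1 ⟨(t : ℕ) + 1, h⟩) (w.1 ⟨(t : ℕ) + 1, h⟩) : Measure (S × W × A1))
        = ∫ q, stepTest P0c P1c α0 μf t f q
          ∂(mixPM a b hab (v.1 t) (w.1 t) : Measure (S × W × A1))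
    rw [mixPM_coe, mixPM_coe, integral_mix a b (cont_integrable hfc1) (cont_integrable hfc1),
      integral_mix a b (integrable_stepTest_cond2 P0c P1c m0 α0 μf hv t h hf)
        (integrable_stepTest_cond2 P0c P1c m0 α0 μf hw t h hf),
      hv.2.1 t h f hf, hw.2.1 t h f hf]
  · intro h f hf
    show ∫ q, f q.1 q.2 ∂(mixPM a b hab v.2 w.2 : Measure (S × W))
        = ∫ q, stepTest P0c P1c α0 μf ⟨T - 1, Nat.sub_lt h Nat.one_pos⟩ f q
          ∂(mixPM a b hab (v.1 ⟨T - 1, Nat.sub_lt h Nat.one_pos⟩)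
              (w.1 ⟨T - 1, Nat.sub_lt h Nat.one_pos⟩) : Measure (S × W × A1))
    rw [mixPM_coe, mixPM_coe, integral_mix a b (cont_integrable hf) (cont_integrable hf),
      integral_mix a b (integrable_stepTest_cond3 P0c P1c m0 α0 μf hv h hf)
        (integrable_stepTest_cond3 P0c P1c m0 α0 μf hw h hf),
      hv.2.2 h f hf, hw.2.2 h f hf]

lemma mix_mem_Dset
    {v w : (Fin T → ProbabilityMeasure (S × W × A1)) × ProbabilityMeasure (S × W)}
    (hv : v ∈ Dset P0c P1c f1 g1 m0 α0 μf) (hw : w ∈ Dset P0c P1c f1 g1 m0 α0 μf)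
    (a b : ℝ≥0) (hab : a + b = 1) :
    (fun t => mixPM a b hab (v.1 t) (w.1 t), mixPM a b hab v.2 w.2)
      ∈ Dset P0c P1c f1 g1 m0 α0 μf := by
  refine ⟨?_, mix_mem_Cset P0c P1c m0 α0 μf hv.2 hw.2 a b hab⟩
  intro t
  show (mixPM a b hab (v.1 t) (w.1 t) : Measure (S × W × A1)) _ = 1
  rw [mixPM_coe, Measure.add_apply, Measure.smul_apply, Measure.smul_apply,
    hv.1 t, hw.1 t, smul_eq_mul, smul_eq_mul, mul_one, mul_one, ← ENNReal.coe_add, hab,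
    ENNReal.coe_one]

lemma mix_mem_Gammac
    {v w : (Fin T → ProbabilityMeasure (S × W × A1)) × ProbabilityMeasure (S × W)}
    (hv : v ∈ Cset P0c P1c m0 α0 μf) (hw : w ∈ Cset P0c P1c m0 α0 μf)
    {x y : (Fin T → W → ProbabilityMeasure (S × A1)) × (W → ProbabilityMeasure S)}
    (hx : x ∈ Gammac v) (hy : y ∈ Gammac w)
    (a b : ℝ≥0) (hab : a + b = 1) (hT : 0 < T) :
    (fun t u => mixPM a b hab (x.1 t u) (y.1 t u), fun u => mixPM a b hab (x.2 u) (y.2 u))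
      ∈ Gammac (fun t => mixPM a b hab (v.1 t) (w.1 t), mixPM a b hab v.2 w.2) := by
  have habE : (a : ℝ≥0∞) + (b : ℝ≥0∞) = 1 := by
    rw [← ENNReal.coe_add, hab, ENNReal.coe_one]
  constructor
  · intro t u B hB
    have hc := marg_fin_set P0c P1c m0 α0 μf hv hw t u
    show (mixPM a b hab (v.1 t) (w.1 t) : Measure (S × W × A1)) _
        = (mixPM a b hab (x.1 t u) (y.1 t u) : Measure (S × A1)) B
          * (mixPM a b hab (v.1 t) (w.1 t) : Measure (S × W × A1)) _
    rw [mixPM_coe, mixPM_coe, Measure.add_apply, Measure.add_apply, Measure.add_apply,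
      Measure.smul_apply, Measure.smul_apply, Measure.smul_apply, Measure.smul_apply,
      Measure.smul_apply, Measure.smul_apply, smul_eq_mul, smul_eq_mul, smul_eq_mul,
      smul_eq_mul, smul_eq_mul, smul_eq_mul, hx.1 t u B hB, hy.1 t u B hB, hc]
    have hmass : (a : ℝ≥0∞) * ((w.1 t : Measure (S × W × A1)) {q | q.2.1 = u})
        + (b : ℝ≥0∞) * ((w.1 t : Measure (S × W × A1)) {q | q.2.1 = u})
        = (w.1 t : Measure (S × W × A1)) {q | q.2.1 = u} := by
      rw [← add_mul, habE, one_mul]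
    rw [hmass]
    ring
  · intro u B hB
    have hc := marg_term_set P0c P1c m0 α0 μf hv hw hT u
    show (mixPM a b hab v.2 w.2 : Measure (S × W)) _
        = (mixPM a b hab (x.2 u) (y.2 u) : Measure S) B
          * (mixPM a b hab v.2 w.2 : Measure (S × W)) _
    rw [mixPM_coe, mixPM_coe, Measure.add_apply, Measure.add_apply, Measure.add_apply,
      Measure.smul_apply, Measure.smul_apply, Measure.smul_apply, Measure.smul_apply,
      Measure.smul_apply, Measure.smul_apply, smul_eq_mul, smul_eq_mul, smul_eq_mul,
      smul_eq_mul, smul_eq_mul, smul_eq_mul, hx.2 u B hB, hy.2 u B hB, hc]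
    have hmass : (a : ℝ≥0∞) * ((w.2 : Measure (S × W)) (Set.univ ×ˢ {u}))
        + (b : ℝ≥0∞) * ((w.2 : Measure (S × W)) (Set.univ ×ˢ {u}))
        = (w.2 : Measure (S × W)) (Set.univ ×ˢ {u}) := by
      rw [← add_mul, habE, one_mul]
    rw [hmass]
    ring

lemma gammac_nonempty
    (v : (Fin T → ProbabilityMeasure (S × W × A1)) × ProbabilityMeasure (S × W)) :
    (Gammac v).Nonempty := by
  classical
  have h1 : ∀ (t : Fin T) (u : W), ∃ μ : ProbabilityMeasure (S × A1),
      ∀ B : Set (S × A1), MeasurableSet B →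
        (v.1 t : Measure (S × W × A1)) {q : S × W × A1 | (q.1, q.2.2) ∈ B ∧ q.2.1 = u}
          = (μ : Measure (S × A1)) B * (v.1 t : Measure (S × W × A1)) {q | q.2.1 = u} := by
    intro t u
    obtain ⟨μ, hμ⟩ := exists_cond (v.1 t) (fun q : S × W × A1 => (q.1, q.2.2))
      (measurable_fst.prodMk (measurable_snd.comp measurable_snd))
      {q : S × W × A1 | q.2.1 = u}
      ((measurable_fst.comp measurable_snd) (measurableSet_singleton u))
    refine ⟨μ, fun B hB => ?_⟩
    have hset : (fun q : S × W × A1 => (q.1, q.2.2)) ⁻¹' B ∩ {q : S × W × A1 | q.2.1 = u}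
        = {q : S × W × A1 | (q.1, q.2.2) ∈ B ∧ q.2.1 = u} := rfl
    rw [← hset]
    exact hμ B hB
  have h2 : ∀ u : W, ∃ μ : ProbabilityMeasure S,
      ∀ B : Set S, MeasurableSet B →
        (v.2 : Measure (S × W)) (B ×ˢ ({u} : Set W))
          = (μ : Measure S) B * (v.2 : Measure (S × W)) (Set.univ ×ˢ ({u} : Set W)) := by
    intro u
    obtain ⟨μ, hμ⟩ := exists_cond v.2 (Prod.fst : S × W → S) measurable_fst
      ((Set.univ : Set S) ×ˢ ({u} : Set W))
      (MeasurableSet.univ.prod (measurableSet_singleton u))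
    refine ⟨μ, fun B hB => ?_⟩
    have hset : (Prod.fst : S × W → S) ⁻¹' B ∩ ((Set.univ : Set S) ×ˢ ({u} : Set W))
        = B ×ˢ ({u} : Set W) := by
      ext q
      simp only [Set.mem_inter_iff, Set.mem_preimage, Set.mem_prod, Set.mem_univ,
        Set.mem_singleton_iff, true_and]
    rw [← hset]
    exact hμ B hB
  exact ⟨(fun t u => (h1 t u).choose, fun u => (h2 u).choose),
    fun t u B hB => (h1 t u).choose_spec B hB, fun u B hB => (h2 u).choose_spec B hB⟩

lemma prodWithUniform (z : W → ProbabilityMeasure S) :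
    ∃ m : ProbabilityMeasure (S × W), ∀ (u : W) (B : Set S), MeasurableSet B →
      (m : Measure (S × W)) (B ×ˢ ({u} : Set W))
        = (z u : Measure S) B * (m : Measure (S × W)) (Set.univ ×ˢ ({u} : Set W)) := by
  classical
  set μm : Measure (S × W) :=
    (Fintype.card W : ℝ≥0∞)⁻¹ • ∑ u' : W, Measure.map (fun s => (s, u')) (z u' : Measure S)
    with hμm
  have hpre : ∀ (u' u : W) (B : Set S),
      (fun s : S => (s, u')) ⁻¹' (B ×ˢ ({u} : Set W)) = if u' = u then B else ∅ := by
    intro u' u B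
    by_cases h : u' = u
    · subst h
      ext s
      simp [Set.mem_prod]
    · ext s
      constructor
      · rintro ⟨-, hu⟩
        exact absurd hu h
      · intro hs
        rw [if_neg h] at hs
        exact hs.elim
  have happly : ∀ (u : W) (B : Set S), MeasurableSet B →
      μm (B ×ˢ ({u} : Set W)) = (Fintype.card W : ℝ≥0∞)⁻¹ * (z u : Measure S) B := by
    intro u B hB
    rw [hμm, Measure.smul_apply, smul_eq_mul]
    congr 1
    rw [Measure.finset_sum_apply]
    have : ∀ u' : W, Measure.map (fun s => (s, u')) (z u' : Measure S) (B ×ˢ ({u} : Set W))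
        = if u' = u then (z u' : Measure S) B else 0 := by
      intro u'
      rw [Measure.map_apply (measurable_prodMk_right)
        (hB.prod (measurableSet_singleton u)), hpre u' u B]
      by_cases h : u' = u <;> simp [h]
    simp only [this]
    simp
  have hprob : IsProbabilityMeasure μm := by
    constructor
    have huniv : (Set.univ : Set (S × W)) = (Set.univ : Set S) ×ˢ (Set.univ : Set W) := by
      simp
    rw [hμm, Measure.smul_apply, smul_eq_mul, Measure.finset_sum_apply]
    have : ∀ u' : W, Measure.map (fun s => (s, u')) (z u' : Measure S) Set.univ = 1 := by
      intro u'
      rw [Measure.map_apply (measurable_prodMk_right) MeasurableSet.univ]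
      simp
    simp only [this]
    simp only [Finset.sum_const, Finset.card_univ, nsmul_eq_mul, mul_one]
    exact ENNReal.inv_mul_cancel (by exact_mod_cast Fintype.card_ne_zero)
      (ENNReal.natCast_ne_top _)
  refine ⟨⟨μm, hprob⟩, fun u B hB => ?_⟩
  show μm (B ×ˢ ({u} : Set W)) = (z u : Measure S) B * μm (Set.univ ×ˢ ({u} : Set W))
  rw [happly u B hB, happly u Set.univ MeasurableSet.univ, measure_univ, mul_one, mul_comm]

end FrameworkAux3

/-- STATEMENT 16: In the control framework:
(i) for any `(α⁰,μ) ∈ 𝒜⁰ × C_μ` such that the set `D(α⁰,μ)` of optimal state-action flows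
is nonempty, the image set `Γ(D(α⁰,μ)) = ⋃_{v ∈ D(α⁰,μ)} Γ(v)` is a nonempty convex subset
of `C_μ` (convexity expressed through convex combinations of the underlying measures);
(ii) the conditioning mapping `Γ : 𝒱 → 2^{C_μ}` has a closed graph: if `vⁿ → v` in `𝒱` and
`μⁿ ∈ Γ(vⁿ)` with `μⁿ → μ` in `C_μ`, then `μ ∈ Γ(v)`. -/
theorem gammac_convex_and_closedGraph
    {S W A0 A1 : Type*}
    [MetricSpace S] [CompactSpace S] [Nonempty S]
    [MeasurableSpace S] [BorelSpace S] [SecondCountableTopology S]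
    [Fintype W] [Nonempty W] [TopologicalSpace W] [DiscreteTopology W]
    [MeasurableSpace W] [BorelSpace W]
    [MetricSpace A0] [CompactSpace A0] [Nonempty A0] [MeasurableSpace A0] [BorelSpace A0]
    [MetricSpace A1] [CompactSpace A1] [Nonempty A1] [MeasurableSpace A1] [BorelSpace A1]
    [SecondCountableTopology A1]
    {T : ℕ}
    (P0c : Fin T → W → A0 → ProbabilityMeasure (S × A1) → ProbabilityMeasure W)
    (P1c : Fin T → S → W → A1 → ProbabilityMeasure (S × A1) → ProbabilityMeasure S)
    (f1 : Fin T → S → W → A1 → ProbabilityMeasure (S × A1) → ℝ)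
    (g1 : S → W → ProbabilityMeasure S → ℝ)
    (m0 : ProbabilityMeasure (S × W))
 :
    -- (i) nonemptiness and convexity of Γ(D(α⁰,μ))
    (∀ (α0 : Fin T → W → ProbabilityMeasure A0)
       (μf : (Fin T → W → ProbabilityMeasure (S × A1)) × (W → ProbabilityMeasure S)),
       (Dset P0c P1c f1 g1 m0 α0 μf).Nonempty →
       (⋃ v ∈ Dset P0c P1c f1 g1 m0 α0 μf, Gammac v).Nonempty ∧
       (∀ x ∈ ⋃ v ∈ Dset P0c P1c f1 g1 m0 α0 μf, Gammac v,
        ∀ y ∈ ⋃ v ∈ Dset P0c P1c f1 g1 m0 α0 μf, Gammac v,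
        ∀ a b : ℝ≥0, a + b = 1 →
          ∃ z ∈ ⋃ v ∈ Dset P0c P1c f1 g1 m0 α0 μf, Gammac v,
            (∀ (t : Fin T) (u : W), (z.1 t u : Measure (S × A1)) =
              (a : ℝ≥0∞) • (x.1 t u : Measure (S × A1)) +
                (b : ℝ≥0∞) • (y.1 t u : Measure (S × A1))) ∧
            (∀ u : W, (z.2 u : Measure S) =
              (a : ℝ≥0∞) • (x.2 u : Measure S) + (b : ℝ≥0∞) • (y.2 u : Measure S)))) ∧
    -- (ii) closed graph of Γ
    (∀ (vseq : ℕ → (Fin T → ProbabilityMeasure (S × W × A1)) × ProbabilityMeasure (S × W))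
       (v : (Fin T → ProbabilityMeasure (S × W × A1)) × ProbabilityMeasure (S × W))
       (μseq : ℕ → (Fin T → W → ProbabilityMeasure (S × A1)) × (W → ProbabilityMeasure S))
       (μf : (Fin T → W → ProbabilityMeasure (S × A1)) × (W → ProbabilityMeasure S)),
       Tendsto vseq atTop (𝓝 v) →
       (∀ n, μseq n ∈ Gammac (vseq n)) →
       Tendsto μseq atTop (𝓝 μf) →
       μf ∈ Gammac v) := by
  classical
  constructor
  · rintro α0 μf ⟨v₀, hv₀⟩
    constructor
    · obtain ⟨μd, hμd⟩ := gammac_nonempty v₀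
      exact ⟨μd, Set.mem_biUnion hv₀ hμd⟩
    · intro x hx y hy a b hab
      obtain ⟨vx, hvx, hxΓ⟩ := Set.mem_iUnion₂.mp hx
      obtain ⟨vy, hvy, hyΓ⟩ := Set.mem_iUnion₂.mp hy
      rcases Nat.eq_zero_or_pos T with hT0 | hT
      · subst hT0
        obtain ⟨m2, hm2⟩ := prodWithUniform (fun u => mixPM a b hab (x.2 u) (y.2 u))
        refine ⟨(fun t u => t.elim0, fun u => mixPM a b hab (x.2 u) (y.2 u)), ?_,
          fun t => t.elim0, fun u => rfl⟩
        have hmemD : ((fun t : Fin 0 => t.elim0, m2) :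
            (Fin 0 → ProbabilityMeasure (S × W × A1)) × ProbabilityMeasure (S × W))
            ∈ Dset P0c P1c f1 g1 m0 α0 μf :=
          ⟨fun t => t.elim0,
            fun h => absurd h (by omega), fun t => t.elim0, fun h => absurd h (by omega)⟩
        have hmemG : ((fun t u => t.elim0, fun u => mixPM a b hab (x.2 u) (y.2 u)) :
            (Fin 0 → W → ProbabilityMeasure (S × A1)) × (W → ProbabilityMeasure S))
            ∈ Gammac ((fun t : Fin 0 => t.elim0, m2) :
            (Fin 0 → ProbabilityMeasure (S × W × A1)) × ProbabilityMeasure (S × W)) :=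
          ⟨fun t => t.elim0, fun u B hB => hm2 u B hB⟩
        exact Set.mem_biUnion hmemD hmemG
      · refine ⟨(fun t u => mixPM a b hab (x.1 t u) (y.1 t u),
          fun u => mixPM a b hab (x.2 u) (y.2 u)), ?_, fun t u => rfl, fun u => rfl⟩
        exact Set.mem_biUnion (mix_mem_Dset P0c P1c f1 g1 m0 α0 μf hvx hvy a b hab)
          (mix_mem_Gammac P0c P1c m0 α0 μf hvx.2 hvy.2 hxΓ hyΓ a b hab hT)
  · intro vseq v μseq μf hv hmem hμ
    constructor
    · intro t u B hB
      have hνt : Tendsto (fun n => (vseq n).1 t) atTop (𝓝 (v.1 t)) := by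
        have h1 : Continuous fun p : (Fin T → ProbabilityMeasure (S × W × A1))
            × ProbabilityMeasure (S × W) => p.1 t :=
          (continuous_apply t).comp continuous_fst
        exact (h1.tendsto v).comp hv
      have hμt : Tendsto (fun n => (μseq n).1 t u) atTop (𝓝 (μf.1 t u)) := by
        have h1 : Continuous fun p : (Fin T → W → ProbabilityMeasure (S × A1))
            × (W → ProbabilityMeasure S) => p.1 t u :=
          (continuous_apply u).comp ((continuous_apply t).comp continuous_fst)
        exact (h1.tendsto μf).comp hμ
      have hres := slice_limit (fun q : S × W × A1 => (q.1, q.2.2))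
        (continuous_fst.prodMk (continuous_snd.comp continuous_snd))
        {q : S × W × A1 | q.2.1 = u}
        ((isClopen_discrete ({u} : Set W)).preimage (continuous_fst.comp continuous_snd))
        hνt hμt (fun n B' hB' => (hmem n).1 t u B' hB') B hB
      exact hres
    · intro u B hB
      have hνt : Tendsto (fun n => (vseq n).2) atTop (𝓝 v.2) := by
        have h1 : Continuous fun p : (Fin T → ProbabilityMeasure (S × W × A1))
            × ProbabilityMeasure (S × W) => p.2 := continuous_snd
        exact (h1.tendsto v).comp hv
      have hμt : Tendsto (fun n => (μseq n).2 u) atTop (𝓝 (μf.2 u)) := by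
        have h1 : Continuous fun p : (Fin T → W → ProbabilityMeasure (S × A1))
            × (W → ProbabilityMeasure S) => p.2 u :=
          (continuous_apply u).comp continuous_snd
        exact (h1.tendsto μf).comp hμ
      have hset : ∀ B' : Set S,
          (Prod.fst : S × W → S) ⁻¹' B' ∩ ((Set.univ : Set S) ×ˢ ({u} : Set W))
            = B' ×ˢ ({u} : Set W) := by
        intro B'
        ext q
        simp only [Set.mem_inter_iff, Set.mem_preimage, Set.mem_prod, Set.mem_univ,
          Set.mem_singleton_iff, true_and]
      have hres := slice_limit (Prod.fst : S × W → S) continuous_fst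
        ((Set.univ : Set S) ×ˢ ({u} : Set W))
        (isClopen_univ.prod (isClopen_discrete ({u} : Set W)))
        hνt hμt (fun n B' hB' => by rw [hset B']; exact (hmem n).2 u B' hB') B hB
      rw [← hset B]
      exact hres
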